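/- Let n ≥ 1 be an integer, a ∈ ℝ with a ≠ 0, and β ∈ ℝ with β ≠ −1 and β ≠ −4. Suppose z ∈ ℝ^{2n} and w ∈ ℝ satisfy (z,w) ≠ (0,0) and 2(β+1)|z|⁸ + (3(β+2) − 2a²)|z|⁴w² + (β+2)a²w⁴ = 0. Let J be the 2n×2n real matrix [[0, Iₙ],[−Iₙ, 0]] and M(z,w) = |z|²·I_{2n} + a·w·J + 2·z·zᵀ − (β+4)·(|z|⁴/(|z|⁴+w²))·z·zᵀ. Then det M(z,w) ≠ 0. (Lemma 3.7: nondegeneracy of the upper-left 2n×2n block of the reduced Hessian on the singular set.) -/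
import Mathlib


noncomputable section

/-- The standard symplectic matrix `J = [[0, Iₙ], [−Iₙ, 0]]` as a `2n × 2n` real matrix,
indexed by `Fin n ⊕ Fin n`. -/
def Jmat (n : ℕ) : Matrix (Fin n ⊕ Fin n) (Fin n ⊕ Fin n) ℝ :=
  Matrix.fromBlocks 0 1 (-1) 0

/-- The matrix `M(z,w) = |z|²·I + a·w·J + 2·z·zᵀ − (β+4)(|z|⁴/(|z|⁴+w²))·z·zᵀ`. -/
def Mmat (n : ℕ) (a β : ℝ) (z : Fin n ⊕ Fin n → ℝ) (w : ℝ) :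
    Matrix (Fin n ⊕ Fin n) (Fin n ⊕ Fin n) ℝ :=
  (∑ i, z i ^ 2) • (1 : Matrix (Fin n ⊕ Fin n) (Fin n ⊕ Fin n) ℝ)
    + (a * w) • Jmat n + (2 : ℝ) • Matrix.vecMulVec z z
    - ((β + 4) * ((∑ i, z i ^ 2) ^ 2 / ((∑ i, z i ^ 2) ^ 2 + w ^ 2))) • Matrix.vecMulVec z z

open Matrix

lemma Jmat_transpose (n : ℕ) : (Jmat n)ᵀ = -Jmat n := by
  simp [Jmat, Matrix.fromBlocks_transpose, Matrix.fromBlocks_neg]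

lemma Jmat_mul_Jmat (n : ℕ) : Jmat n * Jmat n = -1 := by
  simp [Jmat, Matrix.fromBlocks_multiply, ← Matrix.fromBlocks_one, Matrix.fromBlocks_neg]

lemma vecMulVec_mulVec' {n : ℕ} (x y v : Fin n ⊕ Fin n → ℝ) :
    (Matrix.vecMulVec x y) *ᵥ v = (y ⬝ᵥ v) • x := by
  ext i
  simp only [Matrix.mulVec, Matrix.vecMulVec_apply, dotProduct, Pi.smul_apply,
    smul_eq_mul, Finset.mul_sum]
  rw [Finset.sum_mul]
  exact Finset.sum_congr rfl fun j _ => by ring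

lemma dot_J {n : ℕ} (x y : Fin n ⊕ Fin n → ℝ) :
    x ⬝ᵥ (Jmat n *ᵥ y) = -((Jmat n *ᵥ x) ⬝ᵥ y) := by
  rw [Matrix.dotProduct_mulVec, ← Matrix.mulVec_transpose, Jmat_transpose,
    Matrix.neg_mulVec, neg_dotProduct]

lemma Jmat_JJ {n : ℕ} (x : Fin n ⊕ Fin n → ℝ) :
    Jmat n *ᵥ (Jmat n *ᵥ x) = -x := by
  rw [Matrix.mulVec_mulVec, Jmat_mul_Jmat, Matrix.neg_mulVec, Matrix.one_mulVec]

lemma dot_J_self {n : ℕ} (x : Fin n ⊕ Fin n → ℝ) :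
    (Jmat n *ᵥ x) ⬝ᵥ x = 0 := by
  have h := dot_J x x
  rw [dotProduct_comm] at h
  linarith

/-- Lemma 3.7: if `a ≠ 0`, `β ≠ −1`, `β ≠ −4`, `(z,w) ≠ (0,0)` and
`2(β+1)|z|⁸ + (3(β+2)−2a²)|z|⁴w² + (β+2)a²w⁴ = 0`, then `det M(z,w) ≠ 0`. -/
theorem det_Mmat_ne_zero (n : ℕ) (hn : 1 ≤ n) (a β : ℝ) (ha : a ≠ 0)
    (hβ1 : β ≠ -1) (hβ4 : β ≠ -4) (z : Fin n ⊕ Fin n → ℝ) (w : ℝ)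
    (hzw : z ≠ 0 ∨ w ≠ 0)
    (hsing : 2 * (β + 1) * (∑ i, z i ^ 2) ^ 4
        + (3 * (β + 2) - 2 * a ^ 2) * (∑ i, z i ^ 2) ^ 2 * w ^ 2
        + (β + 2) * a ^ 2 * w ^ 4 = 0) :
    (Mmat n a β z w).det ≠ 0 := by
  classical
  intro hdet
  obtain ⟨v, hv, hMv⟩ := Matrix.exists_mulVec_eq_zero_iff.mpr hdet
  rw [Mmat] at hMv
  set r := ∑ i, z i ^ 2 with hrdef
  have hzz : z ⬝ᵥ z = r := by simp [dotProduct, hrdef, sq]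
  by_cases hz : z = 0
  · -- z = 0 case
    have hw : w ≠ 0 := hzw.resolve_left (not_not_intro hz)
    have hr0 : r = 0 := by simp [hrdef, hz]
    rw [hz, hr0] at hMv
    simp only [Matrix.vecMulVec_apply, Pi.zero_apply, zero_mul, zero_smul,
      Matrix.smul_mulVec, Matrix.add_mulVec, Matrix.sub_mulVec,
      Matrix.zero_mulVec, smul_zero, zero_add, sub_zero, add_zero] at hMv
    have hMv' : Matrix.vecMulVec (0 : Fin n ⊕ Fin n → ℝ) (0 : Fin n ⊕ Fin n → ℝ) = 0 := by
      ext i j; simp [Matrix.vecMulVec_apply]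
    rw [hMv'] at hMv
    simp only [Matrix.zero_mulVec, smul_zero, add_zero, sub_zero] at hMv
    have hJv : Jmat n *ᵥ v = 0 := by
      have := smul_eq_zero.mp hMv
      rcases this with h | h
      · exact absurd h (mul_ne_zero ha hw)
      · exact h
    have : v = 0 := by
      have h2 := congrArg (fun x => Jmat n *ᵥ x) hJv
      simp only [Jmat_JJ, Matrix.mulVec_zero, neg_eq_zero] at h2
      exact h2
    exact hv this
  · -- z ≠ 0 case
    obtain ⟨i0, hi0⟩ := Function.ne_iff.mp hz
    have hr_pos : 0 < r := by
      rw [hrdef]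
      apply Finset.sum_pos' (fun i _ => sq_nonneg _)
      have hi0' : z i0 ≠ 0 := by simpa using hi0
      exact ⟨i0, Finset.mem_univ _, pow_two_pos_of_ne_zero hi0'⟩
    have hD : (0:ℝ) < r ^ 2 + w ^ 2 := by positivity
    set c : ℝ := (β + 4) * (r ^ 2 / (r ^ 2 + w ^ 2)) with hcdef
    rw [Matrix.sub_mulVec, Matrix.add_mulVec, Matrix.add_mulVec,
      Matrix.smul_mulVec, Matrix.smul_mulVec, Matrix.smul_mulVec,
      Matrix.smul_mulVec, Matrix.one_mulVec, vecMulVec_mulVec'] at hMv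
    set s : ℝ := z ⬝ᵥ v with hsdef
    set u : ℝ := (Jmat n *ᵥ z) ⬝ᵥ v with hudef
    have e3 := congrArg (fun x => z ⬝ᵥ x) hMv
    simp only [dotProduct_add, dotProduct_sub, dotProduct_smul,
      dotProduct_zero, smul_eq_mul, dot_J, hzz, ← hsdef, ← hudef] at e3
    have e4 := congrArg (fun x => (Jmat n *ᵥ z) ⬝ᵥ x) hMv
    simp only [dotProduct_add, dotProduct_sub, dotProduct_smul,
      dotProduct_zero, smul_eq_mul, dot_J, Jmat_JJ, neg_dotProduct,
      dot_J_self, hzz, ← hsdef, ← hudef, mul_zero, neg_neg] at e4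
    have hN : -(β+1)*r^4 + (3+a^2)*r^2*w^2 + a^2*w^4 ≠ 0 := by
      intro hN0
      have key : (β + 4) * (w^2 * (3*r^2 + a^2*w^2)) = 0 := by
        linear_combination 2 * hN0 + hsing
      rcases mul_eq_zero.mp key with h | h
      · exact hβ4 (by linarith)
      rcases mul_eq_zero.mp h with h' | h'
      · have hw0 : w = 0 := sq_eq_zero_iff.mp h'
        rw [hw0] at hN0
        have h5 : (-(β+1)) * r^4 = 0 := by linear_combination hN0
        rcases mul_eq_zero.mp h5 with h6 | h6
        · exact hβ1 (by linarith)
        · have : (0:ℝ) < r^4 := by positivity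
          linarith
      · nlinarith [mul_pos hr_pos hr_pos, sq_nonneg (a*w)]
    have hKD : ((3 - c) * r^2 + a^2*w^2) * (r^2 + w^2)
        = -(β+1)*r^4 + (3+a^2)*r^2*w^2 + a^2*w^4 := by
      rw [hcdef]; field_simp; ring
    have hKne : (3 - c) * r^2 + a^2*w^2 ≠ 0 := fun h => hN (by rw [← hKD, h, zero_mul])
    have hKs : ((3 - c) * r^2 + a^2*w^2) * s = 0 := by
      linear_combination r * e3 + (a*w) * e4
    have hs0 : s = 0 := (mul_eq_zero.mp hKs).resolve_left hKne
    rw [hs0] at hMv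
    simp only [zero_smul, smul_zero, add_zero, sub_zero] at hMv
    have hv2 := congrArg (fun x => Jmat n *ᵥ x) hMv
    simp only [Matrix.mulVec_add, Matrix.mulVec_smul, Jmat_JJ, Matrix.mulVec_zero] at hv2
    have hvz : v = 0 := by
      funext i
      have h1 := congrFun hMv i
      have h2 := congrFun hv2 i
      simp only [Pi.add_apply, Pi.smul_apply, Pi.neg_apply, Pi.zero_apply, smul_eq_mul] at h1 h2
      have hpos : (0:ℝ) < r^2 + (a*w)^2 := by positivity
      have h7 : (r^2 + (a*w)^2) * v i = 0 := by linear_combination r * h1 - (a*w) * h2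
      have h8 := (mul_eq_zero.mp h7).resolve_left (ne_of_gt hpos)
      simpa using h8
    exact hv hvz
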